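/- Let {f̂(n)}_{n≥0} ∈ GBV and {f̂(n) + f̂(−n)}_{n≥1} ∈ GBV. Then there exists C > 0 such that for all n ≥ 1 and all x ∈ [0, π]: |Σ_{k=1}^{n} f̂(−n−k) sin kx| ≤ C·max_{1≤k≤n} k·(|f̂(n+k)| + |f̂(−n−k)|). -/

import Mathlib

open Filter Complex Real

noncomputable section

/-- `K(θ) = {z ∈ ℂ : |arg z| ≤ θ}`. -/
def Kset (θ : ℝ) : Set ℂ := {z : ℂ | |Complex.arg z| ≤ θ}

/-- The class GBV: `c_n ∈ K(θ₁)` for some `θ₁ ∈ [0, π/2)` and all `n ≥ 1`, and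
`Σ_{n=m}^{2m} |Δc_n| ≤ M · max_{m ≤ n < m+N₀} |c_n|` for all `m ≥ 1`. -/
def GBV (c : ℕ → ℂ) : Prop :=
  (∃ θ₁ : ℝ, 0 ≤ θ₁ ∧ θ₁ < Real.pi / 2 ∧ ∀ n, 1 ≤ n → c n ∈ Kset θ₁) ∧
  (∃ N₀ : ℕ, 1 ≤ N₀ ∧ ∃ M : ℝ, 0 < M ∧ ∀ m, 1 ≤ m →
    (∑ n ∈ Finset.Icc m (2 * m), ‖c n - c (n + 1)‖) ≤
      M * ⨆ n ∈ Finset.Ico m (m + N₀), ‖c n‖)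

lemma real_biSup_le {s : Finset ℕ} {f : ℕ → ℝ} {B : ℝ} (hB : 0 ≤ B)
    (h : ∀ k ∈ s, f k ≤ B) : (⨆ k ∈ s, f k) ≤ B := by
  refine ciSup_le fun k => ?_
  by_cases hk : k ∈ s
  · rw [ciSup_pos hk]; exact h k hk
  · haveI : IsEmpty (k ∈ s) := ⟨hk⟩
    rw [Real.iSup_of_isEmpty]; exact hB

lemma le_real_biSup {s : Finset ℕ} (f : ℕ → ℝ) {k : ℕ} (hk : k ∈ s) :
    f k ≤ ⨆ j ∈ s, f j := by
  have hbdd : BddAbove (Set.range fun j => ⨆ _ : j ∈ s, f j) := by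
    refine ⟨∑ j ∈ s, |f j|, ?_⟩
    rintro y ⟨j, rfl⟩
    simp only
    by_cases hj : j ∈ s
    · rw [ciSup_pos hj]
      calc f j ≤ |f j| := le_abs_self _
        _ ≤ ∑ i ∈ s, |f i| := Finset.single_le_sum (fun i _ => abs_nonneg (f i)) hj
    · haveI : IsEmpty (j ∈ s) := ⟨hj⟩
      rw [Real.iSup_of_isEmpty]
      exact Finset.sum_nonneg fun i _ => abs_nonneg (f i)
  calc f k = ⨆ _ : k ∈ s, f k := (ciSup_pos (f := fun _ => f k) hk).symm
    _ ≤ ⨆ j ∈ s, f j := le_ciSup hbdd k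

lemma abs_exp_xI_sub_one (x : ℝ) : ‖Complex.exp (x * I) - 1‖ = 2 * |Real.sin (x / 2)| := by
  have h : Complex.exp (x * I) - 1 = Complex.ofReal (Real.cos x - 1) + Complex.ofReal (Real.sin x) * I := by
    rw [Complex.exp_mul_I, ← Complex.ofReal_cos, ← Complex.ofReal_sin]
    push_cast
    ring
  rw [h, Real.abs_sin_half]
  rw [Complex.norm_def, Complex.normSq_apply]
  simp only [Complex.add_re, Complex.ofReal_re, Complex.mul_re, Complex.I_re, Complex.I_im,
    Complex.ofReal_im, Complex.add_im, Complex.mul_im]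
  have hs : Real.sin x ^ 2 + Real.cos x ^ 2 = 1 := Real.sin_sq_add_cos_sq x
  rw [show (2:ℝ) * Real.sqrt ((1 - Real.cos x) / 2) = Real.sqrt (2^2 * ((1 - Real.cos x)/2)) by
    rw [Real.sqrt_mul (by positivity), Real.sqrt_sq (by norm_num)]]
  congr 1
  nlinarith [hs]

lemma sin_sum_le (x : ℝ) (hx : 0 < x) (hx' : x ≤ Real.pi) (m : ℕ) :
    ‖∑ i ∈ Finset.range m, (Real.sin (i * x) : ℂ)‖ ≤ Real.pi / x := by
  have hpi := Real.pi_pos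
  have hsin : x / Real.pi ≤ Real.sin (x / 2) := by
    simpa using Real.mul_le_sin (x := x/2) (by positivity) (by linarith)
  have hsinpos : 0 < Real.sin (x / 2) := lt_of_lt_of_le (by positivity) hsin
  set z : ℂ := Complex.exp (x * I) with hz
  have habs : ‖z - 1‖ = 2 * Real.sin (x / 2) := by
    rw [abs_exp_xI_sub_one, abs_of_pos hsinpos]
  have hz1 : z ≠ 1 := by
    intro h
    rw [h] at habs
    simp at habs
    linarith
  have hpow : ∀ i : ℕ, z ^ i = Complex.exp ((i * x : ℝ) * I) := by
    intro i
    rw [← Complex.exp_nat_mul]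
    push_cast
    ring_nf
  have him : ∀ i : ℕ, (z ^ i).im = Real.sin (i * x) := by
    intro i
    rw [hpow i, Complex.exp_ofReal_mul_I_im]
  have hsum : (∑ i ∈ Finset.range m, (Real.sin (i * x) : ℂ)) = ((∑ i ∈ Finset.range m, z ^ i).im : ℂ) := by
    rw [Complex.im_sum, Complex.ofReal_sum]
    exact Finset.sum_congr rfl fun i _ => by rw [him i]
  rw [hsum, Complex.norm_real, Real.norm_eq_abs]
  have h1 : |(∑ i ∈ Finset.range m, z ^ i).im| ≤ ‖∑ i ∈ Finset.range m, z ^ i‖ :=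
    Complex.abs_im_le_norm _
  have h2 : ‖∑ i ∈ Finset.range m, z ^ i‖ ≤ 2 / (2 * Real.sin (x / 2)) := by
    rw [geom_sum_eq hz1, norm_div, habs]
    gcongr
    calc ‖z ^ m - 1‖ ≤ ‖z ^ m‖ + 1 := by
          simpa using norm_sub_le (z ^ m) 1
      _ ≤ 2 := by
          rw [norm_pow, hz, Complex.norm_exp_ofReal_mul_I, one_pow]; norm_num
  have h3 : 2 / (2 * Real.sin (x / 2)) ≤ Real.pi / x := by
    rw [show (2:ℝ) / (2 * Real.sin (x/2)) = 1 / Real.sin (x/2) by field_simp]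
    rw [div_le_div_iff₀ hsinpos hx]
    calc 1 * x = x := one_mul x
      _ ≤ Real.pi * (x / Real.pi) := by field_simp; exact le_rfl
      _ ≤ Real.pi * Real.sin (x/2) := by gcongr
  linarith

/-- Lemma 6 (second estimate): under the GBV hypotheses, uniformly for `x ∈ [0, π]`,
`|Σ_{k=1}^{n} f̂(−n−k) sin kx| = O(max_{1≤k≤n} k(|f̂(n+k)| + |f̂(−n−k)|))`. -/
theorem stmt_9 (fhat : ℤ → ℂ)
    (h1 : GBV (fun n : ℕ => fhat (n : ℤ)))
    (h2 : GBV (fun n : ℕ => fhat (n : ℤ) + fhat (-(n : ℤ)))) :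
    ∃ C : ℝ, 0 < C ∧ ∀ n : ℕ, 1 ≤ n → ∀ x ∈ Set.Icc (0 : ℝ) Real.pi,
      ‖∑ k ∈ Finset.Icc 1 n,
          fhat (-(n : ℤ) - (k : ℤ)) * (Real.sin (k * x) : ℂ)‖ ≤
        C * ⨆ k ∈ Finset.Icc 1 n,
          (k : ℝ) * (‖fhat ((n : ℤ) + (k : ℤ))‖ +
            ‖fhat (-(n : ℤ) - (k : ℤ))‖) := by
  obtain ⟨N₁, hN₁, M₁, hM₁, hV₁⟩ := h1.2
  obtain ⟨N₂, hN₂, M₂, hM₂, hV₂⟩ := h2.2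
  have hpi := Real.pi_pos
  refine ⟨2 + (N₁ + N₂ : ℝ) + Real.pi * (M₁ + 2*M₂ + 2), by positivity, ?_⟩
  set C := 2 + (N₁ + N₂ : ℝ) + Real.pi * (M₁ + 2*M₂ + 2) with hC
  intro n hn x hx
  set A := ⨆ k ∈ Finset.Icc 1 n,
      (k : ℝ) * (‖fhat ((n : ℤ) + (k : ℤ))‖ +
        ‖fhat (-(n : ℤ) - (k : ℤ))‖) with hAdef
  have hA : ∀ k : ℕ, 1 ≤ k → k ≤ n →
      (k : ℝ) * (‖fhat ((n : ℤ) + (k : ℤ))‖ +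
        ‖fhat (-(n : ℤ) - (k : ℤ))‖) ≤ A :=
    fun k hk1 hk2 => le_real_biSup
      (fun k : ℕ => (k : ℝ) * (‖fhat ((n : ℤ) + (k : ℤ))‖ +
        ‖fhat (-(n : ℤ) - (k : ℤ))‖)) (Finset.mem_Icc.mpr ⟨hk1, hk2⟩)
  have hA0 : 0 ≤ A :=
    le_trans (by positivity) (hA 1 le_rfl hn)
  have hfp : ∀ k : ℕ, 1 ≤ k → k ≤ n → ‖fhat ((n : ℤ) + (k : ℤ))‖ ≤ A / k := by
    intro k hk1 hk2
    rw [le_div_iff₀ (by exact_mod_cast hk1 : (0:ℝ) < k)]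
    calc ‖fhat ((n : ℤ) + (k : ℤ))‖ * k
        ≤ (‖fhat ((n : ℤ) + (k : ℤ))‖ + ‖fhat (-(n : ℤ) - (k : ℤ))‖) * k := by
          have := norm_nonneg (fhat (-(n : ℤ) - (k : ℤ)))
          have : (0:ℝ) ≤ (k:ℝ) := by positivity
          nlinarith [norm_nonneg (fhat (-(n : ℤ) - (k : ℤ)))]
      _ = (k : ℝ) * (‖fhat ((n : ℤ) + (k : ℤ))‖ + ‖fhat (-(n : ℤ) - (k : ℤ))‖) := by ring
      _ ≤ A := hA k hk1 hk2
  have hfm : ∀ k : ℕ, 1 ≤ k → k ≤ n → ‖fhat (-(n : ℤ) - (k : ℤ))‖ ≤ A / k := by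
    intro k hk1 hk2
    rw [le_div_iff₀ (by exact_mod_cast hk1 : (0:ℝ) < k)]
    calc ‖fhat (-(n : ℤ) - (k : ℤ))‖ * k
        ≤ (‖fhat ((n : ℤ) + (k : ℤ))‖ + ‖fhat (-(n : ℤ) - (k : ℤ))‖) * k := by
          nlinarith [norm_nonneg (fhat ((n : ℤ) + (k : ℤ))), (by positivity : (0:ℝ) ≤ (k:ℝ))]
      _ = (k : ℝ) * (‖fhat ((n : ℤ) + (k : ℤ))‖ + ‖fhat (-(n : ℤ) - (k : ℤ))‖) := by ring
      _ ≤ A := hA k hk1 hk2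
  rcases eq_or_lt_of_le hx.1 with hx0 | hx0
  · -- x = 0
    simp only [← hx0, mul_zero, Real.sin_zero, Complex.ofReal_zero]
    simp only [mul_zero, Finset.sum_const_zero, norm_zero]
    positivity
  · -- 0 < x
    have hxpi : x ≤ Real.pi := hx.2
    set N := Nat.floor (1/x) with hNdef
    have hNle : (N:ℝ) ≤ 1/x := Nat.floor_le (by positivity)
    have hNlt : 1/x < (N:ℝ) + 1 := Nat.lt_floor_add_one _
    have hxN : 1/((N:ℝ)+1) ≤ x := by
      rw [div_le_iff₀ (by positivity)]
      have h1 : 1 < ((N:ℝ)+1) * x := by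
        have := (div_lt_iff₀ hx0).mp hNlt
        linarith [this]
      linarith [h1]
    have hNx : (N:ℝ) * x ≤ 1 := by
      have := (le_div_iff₀ hx0).mp hNle
      linarith
    set m0 := min N n with hm0
    have hm0n : m0 ≤ n := min_le_right N n
    have hsplit : (∑ k ∈ Finset.Ioc 0 m0, fhat (-(n : ℤ) - (k : ℤ)) * (Real.sin (k * x) : ℂ))
        + (∑ k ∈ Finset.Ioc m0 n, fhat (-(n : ℤ) - (k : ℤ)) * (Real.sin (k * x) : ℂ))
        = ∑ k ∈ Finset.Icc 1 n, fhat (-(n : ℤ) - (k : ℤ)) * (Real.sin (k * x) : ℂ) := by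
      rw [show Finset.Icc 1 n = Finset.Ioc 0 n from rfl]
      exact Finset.sum_Ioc_consecutive _ (Nat.zero_le m0) hm0n
    have hP1 : ‖∑ k ∈ Finset.Ioc 0 m0, fhat (-(n : ℤ) - (k : ℤ)) * (Real.sin (k * x) : ℂ)‖ ≤ A := by
      calc ‖∑ k ∈ Finset.Ioc 0 m0, fhat (-(n : ℤ) - (k : ℤ)) * (Real.sin (k * x) : ℂ)‖
          ≤ ∑ k ∈ Finset.Ioc 0 m0, ‖fhat (-(n : ℤ) - (k : ℤ)) * (Real.sin (k * x) : ℂ)‖ :=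
            norm_sum_le _ _
        _ ≤ ∑ _k ∈ Finset.Ioc 0 m0, A * x := by
            refine Finset.sum_le_sum fun k hk => ?_
            obtain ⟨hk0, hkm⟩ := Finset.mem_Ioc.mp hk
            have hkn : k ≤ n := le_trans hkm hm0n
            have hkpos : (0:ℝ) < k := by exact_mod_cast hk0
            rw [norm_mul, Complex.norm_real, Real.norm_eq_abs]
            have hsin : |Real.sin (k * x)| ≤ (k:ℝ) * x :=
              le_trans Real.abs_sin_le_abs (le_of_eq (abs_of_nonneg (by positivity)))
            calc ‖fhat (-(n : ℤ) - (k : ℤ))‖ * |Real.sin (k * x)|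
                ≤ (A / k) * ((k:ℝ) * x) := by
                  apply mul_le_mul (hfm k hk0 hkn) hsin (abs_nonneg _) (by positivity)
              _ = A * x := by field_simp
        _ = (m0 : ℝ) * (A * x) := by rw [Finset.sum_const, Nat.card_Ioc]; simp
        _ ≤ A := by
            have hm0N : (m0:ℝ) ≤ (N:ℝ) := by exact_mod_cast min_le_left N n
            nlinarith [mul_nonneg hA0 hx0.le]
    by_cases hbig : n ≤ N + (N₁ + N₂)
    · -- few tail terms
      have hP2 : ‖∑ k ∈ Finset.Ioc m0 n, fhat (-(n : ℤ) - (k : ℤ)) * (Real.sin (k * x) : ℂ)‖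
          ≤ ((N₁ + N₂ : ℕ) : ℝ) * A := by
        calc ‖∑ k ∈ Finset.Ioc m0 n, fhat (-(n : ℤ) - (k : ℤ)) * (Real.sin (k * x) : ℂ)‖
            ≤ ∑ k ∈ Finset.Ioc m0 n, ‖fhat (-(n : ℤ) - (k : ℤ)) * (Real.sin (k * x) : ℂ)‖ :=
              norm_sum_le _ _
          _ ≤ ∑ _k ∈ Finset.Ioc m0 n, A := by
              refine Finset.sum_le_sum fun k hk => ?_
              obtain ⟨hk0, hkn⟩ := Finset.mem_Ioc.mp hk
              have hk1 : 1 ≤ k := Nat.one_le_iff_ne_zero.mpr (by omega)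
              rw [norm_mul, Complex.norm_real, Real.norm_eq_abs]
              calc ‖fhat (-(n : ℤ) - (k : ℤ))‖ * |Real.sin (k * x)|
                  ≤ (A / k) * 1 :=
                    mul_le_mul (hfm k hk1 hkn) (abs_le.mpr ⟨Real.neg_one_le_sin _, Real.sin_le_one _⟩)
                      (abs_nonneg _) (by positivity)
                _ = A / k := mul_one _
                _ ≤ A := div_le_self hA0 (by exact_mod_cast hk1)
          _ = ((n - m0 : ℕ) : ℝ) * A := by rw [Finset.sum_const, Nat.card_Ioc]; simp
          _ ≤ ((N₁ + N₂ : ℕ) : ℝ) * A := by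
              apply mul_le_mul_of_nonneg_right _ hA0
              exact_mod_cast (by omega : n - m0 ≤ N₁ + N₂)
      calc ‖∑ k ∈ Finset.Icc 1 n, fhat (-(n : ℤ) - (k : ℤ)) * (Real.sin (k * x) : ℂ)‖
          ≤ A + ((N₁ + N₂ : ℕ) : ℝ) * A := by
            rw [← hsplit]
            exact le_trans (norm_add_le _ _) (add_le_add hP1 hP2)
        _ ≤ C * A := by
            rw [hC]
            push_cast
            nlinarith [hA0, mul_nonneg (mul_nonneg hpi.le (by linarith [hM₁, hM₂] : (0:ℝ) ≤ M₁ + 2*M₂ + 2)) hA0]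
    · -- main case : N + N₁ + N₂ < n
      push_neg at hbig
      have hNn : N < n := by omega
      have hm0N : m0 = N := min_eq_left (by omega)
      have hG : ∀ t : ℕ, ‖∑ i ∈ Finset.range t, (Real.sin (i * x) : ℂ)‖ ≤ Real.pi / x :=
        fun t => sin_sum_le x hx0 hxpi t
      have hAxm : ∀ k : ℕ, N + 1 ≤ k → k ≤ n → ‖fhat (-(n : ℤ) - (k : ℤ))‖ ≤ A * x := by
        intro k hk1 hk2
        calc ‖fhat (-(n : ℤ) - (k : ℤ))‖ ≤ A / k := hfm k (by omega) hk2
          _ ≤ A / ((N:ℝ) + 1) := by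
              gcongr
              exact_mod_cast hk1
          _ ≤ A * x := by
              rw [div_eq_mul_one_div]
              exact mul_le_mul_of_nonneg_left hxN hA0
      have hAxp : ∀ k : ℕ, N + 1 ≤ k → k ≤ n → ‖fhat ((n : ℤ) + (k : ℤ))‖ ≤ A * x := by
        intro k hk1 hk2
        calc ‖fhat ((n : ℤ) + (k : ℤ))‖ ≤ A / k := hfp k (by omega) hk2
          _ ≤ A / ((N:ℝ) + 1) := by
              gcongr
              exact_mod_cast hk1
          _ ≤ A * x := by
              rw [div_eq_mul_one_div]
              exact mul_le_mul_of_nonneg_left hxN hA0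
      -- variation bound
      set m := n + N + 1 with hmdef
      have hm1 : 1 ≤ m := by omega
      have hsupb : (⨆ j ∈ Finset.Ico m (m + N₁), ‖(fun n : ℕ => fhat (n : ℤ)) j‖) ≤ A * x := by
        apply real_biSup_le (mul_nonneg hA0 hx0.le)
        intro j hj
        obtain ⟨hj1, hj2⟩ := Finset.mem_Ico.mp hj
        have hjt : j = n + (j - n) := by omega
        have ht1 : N + 1 ≤ j - n := by omega
        have ht2 : j - n ≤ n := by omega
        simp only
        rw [hjt]
        push_cast
        exact hAxp (j - n) ht1 ht2
      have hsupd : (⨆ j ∈ Finset.Ico m (m + N₂),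
          ‖(fun n : ℕ => fhat (n : ℤ) + fhat (-(n : ℤ))) j‖) ≤ 2 * (A * x) := by
        apply real_biSup_le (by positivity)
        intro j hj
        obtain ⟨hj1, hj2⟩ := Finset.mem_Ico.mp hj
        have hjt : j = n + (j - n) := by omega
        have ht1 : N + 1 ≤ j - n := by omega
        have ht2 : j - n ≤ n := by omega
        simp only
        calc ‖fhat (j : ℤ) + fhat (-(j : ℤ))‖
            ≤ ‖fhat (j : ℤ)‖ + ‖fhat (-(j : ℤ))‖ := norm_add_le _ _
          _ ≤ A * x + A * x := by
              apply add_le_add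
              · rw [hjt]; push_cast; exact hAxp (j - n) ht1 ht2
              · rw [hjt]
                have : -((((n + (j - n)) : ℕ)) : ℤ) = -(n : ℤ) - ((j - n : ℕ) : ℤ) := by push_cast; ring
                rw [this]
                exact hAxm (j - n) ht1 ht2
          _ = 2 * (A * x) := by ring
      have hVar : (∑ i ∈ Finset.Ioc N (n - 1),
          ‖fhat (-(n : ℤ) - ((i + 1 : ℕ) : ℤ)) - fhat (-(n : ℤ) - (i : ℤ))‖)
          ≤ M₁ * (A * x) + M₂ * (2 * (A * x)) := by
        have hreindex : (∑ i ∈ Finset.Ioc N (n - 1),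
            ‖fhat (-(n : ℤ) - ((i + 1 : ℕ) : ℤ)) - fhat (-(n : ℤ) - (i : ℤ))‖)
            = ∑ j ∈ Finset.Ioc (n + N) (n + (n - 1)),
              ‖fhat (-((j + 1 : ℕ) : ℤ)) - fhat (-(j : ℤ))‖ := by
          rw [← Finset.map_add_left_Ioc, Finset.sum_map]
          refine Finset.sum_congr rfl fun i _ => ?_
          simp only [addLeftEmbedding_apply]
          congr 2 <;> push_cast <;> ring_nf
        rw [hreindex]
        have hsubset : Finset.Ioc (n + N) (n + (n - 1)) ⊆ Finset.Icc m (2 * m) := by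
          intro j hj
          rw [Finset.mem_Ioc] at hj
          rw [Finset.mem_Icc]
          omega
        calc (∑ j ∈ Finset.Ioc (n + N) (n + (n - 1)),
              ‖fhat (-((j + 1 : ℕ) : ℤ)) - fhat (-(j : ℤ))‖)
            ≤ ∑ j ∈ Finset.Icc m (2 * m),
              ‖fhat (-((j + 1 : ℕ) : ℤ)) - fhat (-(j : ℤ))‖ :=
              Finset.sum_le_sum_of_subset_of_nonneg hsubset (fun _ _ _ => by positivity)
          _ ≤ ∑ j ∈ Finset.Icc m (2 * m),
              (‖(fun n : ℕ => fhat (n : ℤ)) j - (fun n : ℕ => fhat (n : ℤ)) (j + 1)‖ +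
               ‖(fun n : ℕ => fhat (n : ℤ) + fhat (-(n : ℤ))) j -
                 (fun n : ℕ => fhat (n : ℤ) + fhat (-(n : ℤ))) (j + 1)‖) := by
              refine Finset.sum_le_sum fun j _ => ?_
              simp only
              have h3 := norm_sub_le
                (fhat ((j : ℕ) : ℤ) + fhat (-((j : ℕ) : ℤ)) -
                  (fhat (((j + 1 : ℕ)) : ℤ) + fhat (-(((j + 1 : ℕ)) : ℤ))))
                (fhat ((j : ℕ) : ℤ) - fhat (((j + 1 : ℕ)) : ℤ))
              have heq : fhat (-((j + 1 : ℕ) : ℤ)) - fhat (-((j : ℕ) : ℤ)) =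
                  -((fhat ((j : ℕ) : ℤ) + fhat (-((j : ℕ) : ℤ)) -
                    (fhat (((j + 1 : ℕ)) : ℤ) + fhat (-(((j + 1 : ℕ)) : ℤ)))) -
                    (fhat ((j : ℕ) : ℤ) - fhat (((j + 1 : ℕ)) : ℤ))) := by ring
              rw [heq, norm_neg]
              linarith [h3]
          _ = (∑ j ∈ Finset.Icc m (2 * m),
                ‖(fun n : ℕ => fhat (n : ℤ)) j - (fun n : ℕ => fhat (n : ℤ)) (j + 1)‖)
              + ∑ j ∈ Finset.Icc m (2 * m),
                ‖(fun n : ℕ => fhat (n : ℤ) + fhat (-(n : ℤ))) j -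
                  (fun n : ℕ => fhat (n : ℤ) + fhat (-(n : ℤ))) (j + 1)‖ :=
              Finset.sum_add_distrib
          _ ≤ M₁ * (A * x) + M₂ * (2 * (A * x)) := by
              apply add_le_add
              · exact le_trans (hV₁ m hm1) (mul_le_mul_of_nonneg_left hsupb hM₁.le)
              · exact le_trans (hV₂ m hm1) (mul_le_mul_of_nonneg_left hsupd hM₂.le)
      -- Abel summation on the tail
      have habel := Finset.sum_Ioc_by_parts (fun k : ℕ => fhat (-(n : ℤ) - (k : ℤ)))
        (fun i : ℕ => (Real.sin (i * x) : ℂ)) hNn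
      simp only [smul_eq_mul] at habel
      have hxne : x ≠ 0 := ne_of_gt hx0
      have hP2 : ‖∑ k ∈ Finset.Ioc N n,
          fhat (-(n : ℤ) - (k : ℤ)) * (Real.sin (k * x) : ℂ)‖
          ≤ Real.pi * (A * (M₁ + 2 * M₂ + 2)) := by
        rw [habel]
        have hX : ‖fhat (-(n : ℤ) - ((n : ℕ) : ℤ)) *
            (∑ i ∈ Finset.range (n + 1), (Real.sin (i * x) : ℂ))‖ ≤ (A * x) * (Real.pi / x) := by
          rw [norm_mul]
          exact mul_le_mul (hAxm n (by omega) le_rfl) (hG (n + 1)) (norm_nonneg _)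
            (mul_nonneg hA0 hx0.le)
        have hY : ‖fhat (-(n : ℤ) - (((N + 1 : ℕ)) : ℤ)) *
            (∑ i ∈ Finset.range (N + 1), (Real.sin (i * x) : ℂ))‖ ≤ (A * x) * (Real.pi / x) := by
          rw [norm_mul]
          exact mul_le_mul (hAxm (N + 1) le_rfl (by omega)) (hG (N + 1)) (norm_nonneg _)
            (mul_nonneg hA0 hx0.le)
        have hZ : ‖∑ i ∈ Finset.Ioc N (n - 1),
            (fhat (-(n : ℤ) - (((i + 1 : ℕ)) : ℤ)) - fhat (-(n : ℤ) - (i : ℤ))) *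
              (∑ j ∈ Finset.range (i + 1), (Real.sin (j * x) : ℂ))‖
            ≤ (M₁ * (A * x) + M₂ * (2 * (A * x))) * (Real.pi / x) := by
          calc ‖∑ i ∈ Finset.Ioc N (n - 1),
              (fhat (-(n : ℤ) - (((i + 1 : ℕ)) : ℤ)) - fhat (-(n : ℤ) - (i : ℤ))) *
                (∑ j ∈ Finset.range (i + 1), (Real.sin (j * x) : ℂ))‖
              ≤ ∑ i ∈ Finset.Ioc N (n - 1), ‖(fhat (-(n : ℤ) - (((i + 1 : ℕ)) : ℤ)) - fhat (-(n : ℤ) - (i : ℤ))) *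
                  (∑ j ∈ Finset.range (i + 1), (Real.sin (j * x) : ℂ))‖ := norm_sum_le _ _
            _ ≤ ∑ i ∈ Finset.Ioc N (n - 1),
                ‖fhat (-(n : ℤ) - (((i + 1 : ℕ)) : ℤ)) - fhat (-(n : ℤ) - (i : ℤ))‖
                  * (Real.pi / x) := by
                refine Finset.sum_le_sum fun i _ => ?_
                rw [norm_mul]
                exact mul_le_mul_of_nonneg_left (hG (i + 1)) (norm_nonneg _)
            _ = (∑ i ∈ Finset.Ioc N (n - 1),
                ‖fhat (-(n : ℤ) - (((i + 1 : ℕ)) : ℤ)) - fhat (-(n : ℤ) - (i : ℤ))‖)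
                  * (Real.pi / x) := (Finset.sum_mul _ _ _).symm
            _ ≤ (M₁ * (A * x) + M₂ * (2 * (A * x))) * (Real.pi / x) := by
                apply mul_le_mul_of_nonneg_right hVar (by positivity)
        calc ‖fhat (-(n : ℤ) - ((n : ℕ) : ℤ)) *
              (∑ i ∈ Finset.range (n + 1), (Real.sin (i * x) : ℂ))
            - fhat (-(n : ℤ) - (((N + 1 : ℕ)) : ℤ)) *
              (∑ i ∈ Finset.range (N + 1), (Real.sin (i * x) : ℂ))
            - ∑ i ∈ Finset.Ioc N (n - 1),
              (fhat (-(n : ℤ) - (((i + 1 : ℕ)) : ℤ)) - fhat (-(n : ℤ) - (i : ℤ))) *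
                (∑ j ∈ Finset.range (i + 1), (Real.sin (j * x) : ℂ))‖
            ≤ (‖fhat (-(n : ℤ) - ((n : ℕ) : ℤ)) *
              (∑ i ∈ Finset.range (n + 1), (Real.sin (i * x) : ℂ))‖
              + ‖fhat (-(n : ℤ) - (((N + 1 : ℕ)) : ℤ)) *
              (∑ i ∈ Finset.range (N + 1), (Real.sin (i * x) : ℂ))‖)
              + ‖∑ i ∈ Finset.Ioc N (n - 1),
              (fhat (-(n : ℤ) - (((i + 1 : ℕ)) : ℤ)) - fhat (-(n : ℤ) - (i : ℤ))) *
                (∑ j ∈ Finset.range (i + 1), (Real.sin (j * x) : ℂ))‖ := by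
              refine le_trans (norm_sub_le _ _) ?_
              exact add_le_add_left (norm_sub_le _ _) _
          _ ≤ ((A * x) * (Real.pi / x) + (A * x) * (Real.pi / x))
              + (M₁ * (A * x) + M₂ * (2 * (A * x))) * (Real.pi / x) :=
              add_le_add (add_le_add hX hY) hZ
          _ = Real.pi * (A * (M₁ + 2 * M₂ + 2)) := by field_simp; ring
      calc ‖∑ k ∈ Finset.Icc 1 n, fhat (-(n : ℤ) - (k : ℤ)) * (Real.sin (k * x) : ℂ)‖
          ≤ A + Real.pi * (A * (M₁ + 2 * M₂ + 2)) := by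
            rw [← hsplit]
            refine le_trans (norm_add_le _ _) (add_le_add hP1 ?_)
            rw [hm0N]
            exact hP2
        _ ≤ C * A := by
            rw [hC]
            have hkey : (2 + ((N₁:ℝ) + (N₂:ℝ)) + Real.pi * (M₁ + 2*M₂ + 2)) * A -
                (A + Real.pi * (A * (M₁ + 2 * M₂ + 2))) = (1 + ((N₁:ℝ) + (N₂:ℝ))) * A := by ring
            have h9 : (0:ℝ) ≤ (1 + ((N₁:ℝ) + (N₂:ℝ))) * A :=
              mul_nonneg (by positivity) hA0
            linarith [hkey, h9]
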